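/- Let C be an A-coring, D a B-coring, (M, m) a 1-cell from (D:B) to (C:A) in REM(Bim) (i.e. m : C ⊗_A M → M ⊗_B D is A–B-bilinear satisfying (M ⊗ ε_D) ∘ m = ε_C ⊗ M and (m ⊗ D) ∘ (C ⊗ m) ∘ (Δ_C ⊗ M) = (M ⊗ Δ_D) ∘ m). For every right C-comodule (X, ρ^X), the map ρ^{X⊗M} := (X ⊗ m) ∘ (ρ^X ⊗ M) : X ⊗_A M → X ⊗_A M ⊗_B D makes X ⊗_A M a right D-comodule (the push-out functor on objects). -/
import Mathlib

/-!
STATEMENT 11: the push-out functor on objects.  As in STATEMENT 10, `REM(Bim)`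
is formalized as the Eilenberg–Moore bicategory of comonads in an arbitrary
bicategory `𝔅`: corings are comonads `C : a ⟶ a`, `D : b ⟶ b`; a 1-cell
`(M, m)` from `(D : b)` to `(C : a)` is a 1-cell `M : a ⟶ b` with a 2-cell
`m : C ≫ M ⟶ M ≫ D` satisfying the two 1-cell equations; a right `C`-comodule
`(X, ρ^X)` is a 1-cell `X : z ⟶ a` with coaction `x : X ⟶ X ≫ C` satisfying
the comodule laws.  The claim: `ρ^{X ⊗ M} = (X ⊗ m) ∘ (ρ^X ⊗ M)` makes
`X ≫ M` a right `D`-comodule.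
-/

open CategoryTheory Bicategory

theorem wideMorita_stmt11 {𝔅 : Type*} [Bicategory 𝔅] {a b z : 𝔅}
    -- the `A`-coring `C`
    (C : a ⟶ a) (ΔC : C ⟶ C ≫ C) (εC : C ⟶ 𝟙 a)
    (hC_coassoc : ΔC ≫ (ΔC ▷ C) ≫ (α_ C C C).hom = ΔC ≫ (C ◁ ΔC))
    (hC_counit_l : ΔC ≫ (εC ▷ C) ≫ (λ_ C).hom = 𝟙 C)
    (hC_counit_r : ΔC ≫ (C ◁ εC) ≫ (ρ_ C).hom = 𝟙 C)
    -- the `B`-coring `D`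
    (D : b ⟶ b) (ΔD : D ⟶ D ≫ D) (εD : D ⟶ 𝟙 b)
    (hD_coassoc : ΔD ≫ (ΔD ▷ D) ≫ (α_ D D D).hom = ΔD ≫ (D ◁ ΔD))
    (hD_counit_l : ΔD ≫ (εD ▷ D) ≫ (λ_ D).hom = 𝟙 D)
    (hD_counit_r : ΔD ≫ (D ◁ εD) ≫ (ρ_ D).hom = 𝟙 D)
    -- the 1-cell `(M, m)` from `(D : b)` to `(C : a)`
    (M : a ⟶ b) (m : C ≫ M ⟶ M ≫ D)
    (hm1 : m ≫ (M ◁ εD) ≫ (ρ_ M).hom = (εC ▷ M) ≫ (λ_ M).hom)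
    (hm2 : (ΔC ▷ M) ≫ (α_ C C M).hom ≫ (C ◁ m) ≫ (α_ C M D).inv ≫ (m ▷ D) ≫
      (α_ M D D).hom = m ≫ (M ◁ ΔD))
    -- a right `C`-comodule `(X, ρ^X)`
    (X : z ⟶ a) (x : X ⟶ X ≫ C)
    (hx_counit : x ≫ (X ◁ εC) ≫ (ρ_ X).hom = 𝟙 X)
    (hx_coassoc : x ≫ (x ▷ C) ≫ (α_ X C C).hom = x ≫ (X ◁ ΔC)) :
    -- the coaction `ρ^{X ⊗ M} = (X ⊗ m) ∘ (ρ^X ⊗ M)` on `X ≫ M` ...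
    letI rXM : X ≫ M ⟶ (X ≫ M) ≫ D :=
      (x ▷ M) ≫ (α_ X C M).hom ≫ (X ◁ m) ≫ (α_ X M D).inv
    -- ... makes `X ≫ M` a right `D`-comodule:
    (rXM ≫ ((X ≫ M) ◁ εD) ≫ (ρ_ (X ≫ M)).hom = 𝟙 (X ≫ M)) ∧
    (rXM ≫ (rXM ▷ D) ≫ (α_ (X ≫ M) D D).hom = rXM ≫ ((X ≫ M) ◁ ΔD)) := by
  constructor
  · calc ((x ▷ M) ≫ (α_ X C M).hom ≫ (X ◁ m) ≫ (α_ X M D).inv) ≫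
          ((X ≫ M) ◁ εD) ≫ (ρ_ (X ≫ M)).hom
        = (x ▷ M) ≫ (α_ X C M).hom ≫ (X ◁ (m ≫ (M ◁ εD) ≫ (ρ_ M).hom)) := by
          bicategory
      _ = (x ▷ M) ≫ (α_ X C M).hom ≫ (X ◁ ((εC ▷ M) ≫ (λ_ M).hom)) := by
          rw [hm1]
      _ = (x ≫ (X ◁ εC) ≫ (ρ_ X).hom) ▷ M := by bicategory
      _ = 𝟙 (X ≫ M) := by rw [hx_counit]; simp
  · calc ((x ▷ M) ≫ (α_ X C M).hom ≫ (X ◁ m) ≫ (α_ X M D).inv) ≫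
          (((x ▷ M) ≫ (α_ X C M).hom ≫ (X ◁ m) ≫ (α_ X M D).inv) ▷ D) ≫
          (α_ (X ≫ M) D D).hom
        = (x ▷ M) ≫ (α_ X C M).hom ≫ ((X ◁ m) ≫ (x ▷ (M ≫ D))) ≫
            (α_ X C (M ≫ D)).hom ≫ (X ◁ (α_ C M D).inv) ≫ (X ◁ (m ▷ D)) ≫
            (X ◁ (α_ M D D).hom) ≫ (α_ X M (D ≫ D)).inv := by
          bicategory
      _ = (x ▷ M) ≫ (α_ X C M).hom ≫ ((x ▷ (C ≫ M)) ≫ ((X ≫ C) ◁ m)) ≫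
            (α_ X C (M ≫ D)).hom ≫ (X ◁ (α_ C M D).inv) ≫ (X ◁ (m ▷ D)) ≫
            (X ◁ (α_ M D D).hom) ≫ (α_ X M (D ≫ D)).inv := by
          rw [whisker_exchange]
      _ = ((x ≫ (x ▷ C) ≫ (α_ X C C).hom) ▷ M) ≫ (α_ X (C ≫ C) M).hom ≫
            (X ◁ ((α_ C C M).hom ≫ (C ◁ m) ≫ (α_ C M D).inv ≫ (m ▷ D) ≫
              (α_ M D D).hom)) ≫ (α_ X M (D ≫ D)).inv := by
          bicategory
      _ = ((x ≫ (X ◁ ΔC)) ▷ M) ≫ (α_ X (C ≫ C) M).hom ≫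
            (X ◁ ((α_ C C M).hom ≫ (C ◁ m) ≫ (α_ C M D).inv ≫ (m ▷ D) ≫
              (α_ M D D).hom)) ≫ (α_ X M (D ≫ D)).inv := by
          rw [hx_coassoc]
      _ = (x ▷ M) ≫ (α_ X C M).hom ≫
            (X ◁ ((ΔC ▷ M) ≫ (α_ C C M).hom ≫ (C ◁ m) ≫ (α_ C M D).inv ≫
              (m ▷ D) ≫ (α_ M D D).hom)) ≫ (α_ X M (D ≫ D)).inv := by
          bicategory
      _ = (x ▷ M) ≫ (α_ X C M).hom ≫ (X ◁ (m ≫ (M ◁ ΔD))) ≫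
            (α_ X M (D ≫ D)).inv := by
          rw [hm2]
      _ = ((x ▷ M) ≫ (α_ X C M).hom ≫ (X ◁ m) ≫ (α_ X M D).inv) ≫
            ((X ≫ M) ◁ ΔD) := by
          bicategory
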